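/- Let p = (47 - 3√41)/216, and define |Υ⟩ = sqrt((1-3p)/(3-3p))·|00⟩ + sqrt(1/(3-3p))·(|S⟩ + |11⟩) ∈ Sym²(ℂ²), with |S⟩ = (|01⟩+|10⟩)/√2, and W_j = (S_ph⊗S_ph)^j for j = 0,1,2,3 where S_ph = diag(1, i). Then the operators K_j := ((3-3p)/4)·W_j|Υ⟩⟨Υ|W_j† for j = 0,...,3, K₄ := 3p·|00⟩⟨00|, and K₅ := P₂^A (the projector onto the antisymmetric subspace) are positive semidefinite and sum to the identity on ℂ²⊗ℂ², i.e., they form a POVM. -/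

import Mathlib

open Matrix
open scoped ComplexOrder

noncomputable def p : ℝ := (47 - 3*Real.sqrt 41)/216

/-- `|Υ⟩ = √((1-3p)/(3-3p))|00⟩ + √(1/(3-3p))(|S⟩ + |11⟩)` in the computational basis. -/
noncomputable def Υ : Fin 2 × Fin 2 → ℂ :=
  fun v =>
    if v = (0, 0) then (Real.sqrt ((1 - 3*p)/(3 - 3*p)) : ℝ)
    else if v = (1, 1) then (Real.sqrt (1/(3 - 3*p)) : ℝ)
    else ((Real.sqrt (1/(3 - 3*p)) / Real.sqrt 2 : ℝ) : ℂ)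

/-- The phase gate `S = diag(1, i)`. -/
noncomputable def Sph : Matrix (Fin 2) (Fin 2) ℂ := !![1, 0; 0, Complex.I]

/-- `S ⊗ S`. -/
noncomputable def W : Matrix (Fin 2 × Fin 2) (Fin 2 × Fin 2) ℂ :=
  fun v w => Sph v.1 w.1 * Sph v.2 w.2

/-- `|Υ⟩⟨Υ|`. -/
noncomputable def outerΥ : Matrix (Fin 2 × Fin 2) (Fin 2 × Fin 2) ℂ :=
  fun v w => Υ v * (starRingEnd ℂ) (Υ w)

/-- `K_j = ((3-3p)/4) W^j |Υ⟩⟨Υ| (W^j)†` for `j = 0,…,3`. -/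
noncomputable def Ku (j : ℕ) : Matrix (Fin 2 × Fin 2) (Fin 2 × Fin 2) ℂ :=
  (((3 - 3*p)/4 : ℝ) : ℂ) • (W^j * outerΥ * (W^j)ᴴ)

/-- `K₄ = 3p |00⟩⟨00|`. -/
noncomputable def K4 : Matrix (Fin 2 × Fin 2) (Fin 2 × Fin 2) ℂ :=
  ((3*p : ℝ) : ℂ) •
    (Matrix.of fun v w : Fin 2 × Fin 2 => if v = (0, 0) ∧ w = (0, 0) then (1 : ℂ) else 0)

/-- The singlet `|A⟩ = (|01⟩ - |10⟩)/√2`. -/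
noncomputable def singlet : Fin 2 × Fin 2 → ℂ :=
  fun v => if v = (0, 1) then ((1/Real.sqrt 2 : ℝ) : ℂ)
    else if v = (1, 0) then -((1/Real.sqrt 2 : ℝ) : ℂ) else 0

/-- `K₅ = P₂^A = |A⟩⟨A|`. -/
noncomputable def K5 : Matrix (Fin 2 × Fin 2) (Fin 2 × Fin 2) ℂ :=
  fun v w => singlet v * (starRingEnd ℂ) (singlet w)

noncomputable def K : Fin 6 → Matrix (Fin 2 × Fin 2) (Fin 2 × Fin 2) ℂ :=
  ![Ku 0, Ku 1, Ku 2, Ku 3, K4, K5]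

set_option maxHeartbeats 4000000

section Aux

lemma outer_psd {n : Type*} [Fintype n] (v : n → ℂ) :
    Matrix.PosSemidef (Matrix.of fun i j => v i * (starRingEnd ℂ) (v j)) := by
  rw [Matrix.posSemidef_iff_dotProduct_mulVec]; constructor
  · ext i j
    simp [Matrix.conjTranspose_apply, mul_comm]
  · intro x
    have : (star x) ⬝ᵥ ((Matrix.of fun i j => v i * (starRingEnd ℂ) (v j)) *ᵥ x)
        = star (∑ j, (starRingEnd ℂ) (v j) * x j) * (∑ j, (starRingEnd ℂ) (v j) * x j) := by
      simp only [Matrix.mulVec, dotProduct, Matrix.of_apply, Pi.star_apply,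
        star_sum, star_mul', RingHom.id_apply, starRingEnd_self_apply, Finset.mul_sum,
        Finset.sum_mul]
      rw [Finset.sum_comm]
      congr 1; ext i; congr 1; ext j
      simp [mul_comm, mul_left_comm, mul_assoc]
    rw [this]
    exact star_mul_self_nonneg _

lemma smul_psd {n : Type*} [Fintype n] {A : Matrix n n ℂ} (c : ℝ) (hc : 0 ≤ c)
    (hA : A.PosSemidef) : ((c : ℂ) • A).PosSemidef := by
  rw [Matrix.posSemidef_iff_dotProduct_mulVec]; constructor
  · ext i j
    simp [Matrix.conjTranspose_apply, hA.1.apply]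
  · intro x
    rw [Matrix.smul_mulVec, dotProduct_smul, smul_eq_mul]
    exact mul_nonneg (by exact_mod_cast hc) (hA.dotProduct_mulVec_nonneg x)

noncomputable def dfun : Fin 2 × Fin 2 → ℂ :=
  fun v => if v = (0,0) then 1 else if v = (1,1) then -1 else Complex.I

lemma hW : W = Matrix.diagonal dfun := by
  ext ⟨a,b⟩ ⟨c,e⟩
  fin_cases a <;> fin_cases b <;> fin_cases c <;> fin_cases e <;>
    simp [W, Sph, Matrix.diagonal_apply, dfun, Prod.ext_iff]

lemma Ku_apply (j : ℕ) (v w : Fin 2 × Fin 2) :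
    Ku j v w = (((3 - 3*p)/4 : ℝ) : ℂ) *
      (dfun v ^ j * (Υ v * (starRingEnd ℂ) (Υ w)) * (starRingEnd ℂ) (dfun w ^ j)) := by
  simp [Ku, hW, Matrix.diagonal_pow, Matrix.diagonal_conjTranspose, Matrix.mul_diagonal,
    Matrix.diagonal_mul, outerΥ, Pi.pow_apply, Pi.star_apply, Matrix.smul_apply, smul_eq_mul]

lemma sum_six : ∑ j : Fin 6, K j = Ku 0 + Ku 1 + Ku 2 + Ku 3 + K4 + K5 := by
  simp [K, Fin.sum_univ_six]

lemma hsq41 : Real.sqrt 41 ^ 2 = 41 := Real.sq_sqrt (by norm_num)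

lemma hp1 : 3*p < 1 := by
  have hsn : (0:ℝ) ≤ Real.sqrt 41 := Real.sqrt_nonneg _
  unfold p; nlinarith

lemma hp0 : 0 < 3*p := by
  have := hsq41
  have hsn : (0:ℝ) ≤ Real.sqrt 41 := Real.sqrt_nonneg _
  unfold p; nlinarith

lemma h3 : (0:ℝ) < 3 - 3*p := by have := hp1; linarith

lemma cA : (((Real.sqrt ((1 - 3*p)/(3 - 3*p)) : ℝ)) : ℂ) *
    ((Real.sqrt ((1 - 3*p)/(3 - 3*p)) : ℝ) : ℂ) * (3 - 3*(p:ℂ)) = 1 - 3*(p:ℂ) := by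
  have hd : (0:ℝ) ≤ (1 - 3*p)/(3 - 3*p) := by
    apply div_nonneg (by have := hp1; linarith) h3.le
  have hr : Real.sqrt ((1 - 3*p)/(3 - 3*p)) * Real.sqrt ((1 - 3*p)/(3 - 3*p)) * (3 - 3*p)
      = 1 - 3*p := by
    rw [Real.mul_self_sqrt hd, div_mul_cancel₀ _ h3.ne']
  exact_mod_cast hr

lemma cB : (((Real.sqrt (3 - 3*p) : ℝ)) : ℂ)⁻¹ * ((Real.sqrt (3 - 3*p) : ℝ) : ℂ)⁻¹ *
    (3 - 3*(p:ℂ)) = 1 := by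
  have hr : (Real.sqrt (3 - 3*p))⁻¹ * (Real.sqrt (3 - 3*p))⁻¹ * (3 - 3*p) = 1 := by
    rw [← mul_inv, Real.mul_self_sqrt h3.le]
    exact inv_mul_cancel₀ h3.ne'
  exact_mod_cast hr

lemma cC : (((Real.sqrt 2 : ℝ)) : ℂ)⁻¹ * ((Real.sqrt 2 : ℝ) : ℂ)⁻¹ * 2 = 1 := by
  have hr : (Real.sqrt 2)⁻¹ * (Real.sqrt 2)⁻¹ * 2 = 1 := by
    rw [← mul_inv, Real.mul_self_sqrt (by norm_num : (0:ℝ) ≤ 2)]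
    norm_num
  exact_mod_cast hr

end Aux

theorem stmt12 :
    (∀ j : Fin 6, (K j).PosSemidef) ∧
    (∑ j : Fin 6, K j = (1 : Matrix (Fin 2 × Fin 2) (Fin 2 × Fin 2) ℂ)) := by
  constructor
  · have houter : outerΥ.PosSemidef := outer_psd Υ
    have hc : (0:ℝ) ≤ (3 - 3*p)/4 := by have := h3; linarith
    have hKu : ∀ n : ℕ, (Ku n).PosSemidef := fun n =>
      smul_psd _ hc ((houter.mul_mul_conjTranspose_same (W^n)))
    intro j
    fin_cases j
    · exact hKu 0
    · exact hKu 1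
    · exact hKu 2
    · exact hKu 3
    · -- K4
      have he : (Matrix.of fun v w : Fin 2 × Fin 2 =>
            if v = (0, 0) ∧ w = (0, 0) then (1 : ℂ) else 0)
          = Matrix.of (fun v w => (fun u => if u = ((0:Fin 2), (0:Fin 2)) then (1:ℂ) else 0) v *
              (starRingEnd ℂ) ((fun u => if u = ((0:Fin 2), (0:Fin 2)) then (1:ℂ) else 0) w)) := by
        ext v w
        by_cases hv : v = ((0:Fin 2), (0:Fin 2)) <;> by_cases hw : w = ((0:Fin 2), (0:Fin 2)) <;>
          simp only [show (((0:Fin 2), (0:Fin 2)) : Fin 2 × Fin 2) = 0 from rfl] at hv hw <;>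
          simp [hv, hw, Prod.mk_zero_zero]
      show (K4).PosSemidef
      rw [K4, he]
      exact smul_psd _ hp0.le (outer_psd _)
    · exact outer_psd singlet
  · rw [sum_six]
    ext ⟨a,b⟩ ⟨c,e⟩
    have hI3 : Complex.I ^ 3 = -Complex.I := by simp [pow_succ, Complex.I_mul_I]
    have hnI3 : (-Complex.I) ^ 3 = Complex.I := by simp [pow_succ, Complex.I_mul_I]
    have hm13 : ((-1 : ℂ)) ^ 3 = -1 := by norm_num
    fin_cases a <;> fin_cases b <;> fin_cases c <;> fin_cases e <;>
      simp [Matrix.add_apply, Ku_apply, K4, K5, Matrix.smul_apply, Matrix.one_apply,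
        Υ, singlet, dfun, Complex.conj_ofReal, Complex.conj_I, Prod.ext_iff, smul_eq_mul,
        hI3, hnI3, hm13, Complex.I_sq] <;>
      try ring1
    -- remaining: (00,00), (01,01), (01,10), (10,01), (10,10), (11,11)
    · linear_combination cA
    · linear_combination ((Real.sqrt 2 : ℝ) : ℂ)⁻¹ * ((Real.sqrt 2 : ℝ) : ℂ)⁻¹ * cB + cC
        - ((3 - 3*(p:ℂ))/2) * (((Real.sqrt (3 - 3*p) : ℝ) : ℂ)⁻¹ *
          ((Real.sqrt (3 - 3*p) : ℝ) : ℂ)⁻¹ * (((Real.sqrt 2 : ℝ) : ℂ)⁻¹ *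
          ((Real.sqrt 2 : ℝ) : ℂ)⁻¹)) * Complex.I_sq
    · linear_combination ((Real.sqrt 2 : ℝ) : ℂ)⁻¹ * ((Real.sqrt 2 : ℝ) : ℂ)⁻¹ * cB
        - ((3 - 3*(p:ℂ))/2) * (((Real.sqrt (3 - 3*p) : ℝ) : ℂ)⁻¹ *
          ((Real.sqrt (3 - 3*p) : ℝ) : ℂ)⁻¹ * (((Real.sqrt 2 : ℝ) : ℂ)⁻¹ *
          ((Real.sqrt 2 : ℝ) : ℂ)⁻¹)) * Complex.I_sq
    · linear_combination ((Real.sqrt 2 : ℝ) : ℂ)⁻¹ * ((Real.sqrt 2 : ℝ) : ℂ)⁻¹ * cB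
        - ((3 - 3*(p:ℂ))/2) * (((Real.sqrt (3 - 3*p) : ℝ) : ℂ)⁻¹ *
          ((Real.sqrt (3 - 3*p) : ℝ) : ℂ)⁻¹ * (((Real.sqrt 2 : ℝ) : ℂ)⁻¹ *
          ((Real.sqrt 2 : ℝ) : ℂ)⁻¹)) * Complex.I_sq
    · linear_combination ((Real.sqrt 2 : ℝ) : ℂ)⁻¹ * ((Real.sqrt 2 : ℝ) : ℂ)⁻¹ * cB + cC
        - ((3 - 3*(p:ℂ))/2) * (((Real.sqrt (3 - 3*p) : ℝ) : ℂ)⁻¹ *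
          ((Real.sqrt (3 - 3*p) : ℝ) : ℂ)⁻¹ * (((Real.sqrt 2 : ℝ) : ℂ)⁻¹ *
          ((Real.sqrt 2 : ℝ) : ℂ)⁻¹)) * Complex.I_sq
    · linear_combination cB
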